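/- Let F be a finite forest whose connected components are trees T_1, …, T_K, each containing exactly one designated root vertex, and let g_e > 0 be strictly positive conductances on the edges of F. Let L be the reduced weighted graph Laplacian, the square matrix indexed by all non-root vertices of F defined by L(a,a) = Σ_{c : {a,c} is an edge of F} g_{ac}, L(a,b) = -g_{ab} if {a,b} is an edge of F with a ≠ b, and L(a,b) = 0 otherwise. Then L is invertible, and: (i) L^{-1}(a,b) = 0 whenever a and b lie in different trees of F; (ii) if a and b lie in the same tree T_k, then L^{-1}(a,b) = Σ_{e ∈ E_a ∩ E_b} 1/g_e, the sum of the inverse conductances of the edges common to the paths from a and from b to the root of T_k. -/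

import Mathlib

open Classical

/-- A finite forest each of whose connected components contains exactly one
designated root vertex (slack bus). -/
structure GridForest (V : Type*) [Fintype V] [DecidableEq V] where
  graph : SimpleGraph V
  isAcyclic : graph.IsAcyclic
  isRoot : V → Prop
  exists_unique_root : ∀ v : V, ∃! r : V, isRoot r ∧ graph.Reachable v r

namespace GridForest

variable {V : Type*} [Fintype V] [DecidableEq V] (F : GridForest V)

/-- The root of the tree (connected component) containing `v`. -/
noncomputable def rootOf (v : V) : V := (F.exists_unique_root v).choose

/-- The unique path from `v` to the root of its tree. -/
noncomputable def pathToRoot (v : V) : F.graph.Path v (F.rootOf v) :=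
  ((F.exists_unique_root v).choose_spec.1.2.some).toPath

/-- `E_v`: the set of edges on the unique path from `v` to the root of its tree. -/
noncomputable def pathEdges (v : V) : Finset (Sym2 V) :=
  (F.pathToRoot v).1.edges.toFinset

/-- The reduced weighted graph Laplacian with edge weights `w`, indexed by the
non-root vertices (rows and columns of all roots are deleted). -/
noncomputable def lap (w : Sym2 V → ℝ) :
    Matrix {v : V // ¬ F.isRoot v} {v : V // ¬ F.isRoot v} ℝ :=
  fun a b =>
    if a = b then ∑ c ∈ Finset.univ.filter (fun c => F.graph.Adj a.1 c), w s(a.1, c)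
    else if F.graph.Adj a.1 b.1 then - w s(a.1, b.1) else 0

end GridForest

namespace GridForest

open SimpleGraph

variable {V : Type*} [Fintype V] [DecidableEq V] (F : GridForest V)

set_option linter.unusedTactic false

lemma isRoot_rootOf (v : V) : F.isRoot (F.rootOf v) :=
  (F.exists_unique_root v).choose_spec.1.1

lemma rootOf_eq {v r : V} (hr : F.isRoot r) (h : F.graph.Reachable v r) : F.rootOf v = r :=
  ((F.exists_unique_root v).choose_spec.2 r ⟨hr, h⟩).symm

lemma rootOf_root {r : V} (hr : F.isRoot r) : F.rootOf r = r :=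
  F.rootOf_eq hr (SimpleGraph.Reachable.refl r)

lemma pathToRoot_eq (v : V) (p : F.graph.Path v (F.rootOf v)) : F.pathToRoot v = p :=
  F.isAcyclic.path_unique _ _

lemma pathToRoot_root {r : V} (hr : F.isRoot r) :
    (F.pathToRoot r).1 = SimpleGraph.Walk.nil.copy rfl (F.rootOf_root hr).symm := by
  rw [F.pathToRoot_eq r ⟨SimpleGraph.Walk.nil.copy rfl (F.rootOf_root hr).symm, by simp⟩]

lemma support_pathToRoot_root {r : V} (hr : F.isRoot r) :
    (F.pathToRoot r).1.support = [r] := by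
  rw [F.pathToRoot_root hr]; simp

lemma edges_pathToRoot_root {r : V} (hr : F.isRoot r) :
    (F.pathToRoot r).1.edges = [] := by
  rw [F.pathToRoot_root hr]; simp

lemma length_pathToRoot_root {r : V} (hr : F.isRoot r) :
    (F.pathToRoot r).1.length = 0 := by
  rw [F.pathToRoot_root hr]; simp

/-- The parent of a vertex: the next vertex on its path to the root. -/
noncomputable def par (v : V) : V := (F.pathToRoot v).1.getVert 1

lemma pathToRoot_struct (v : V) (hv : ¬ F.isRoot v) :
    ∃ (h : F.graph.Adj v (F.par v)) (hr : F.rootOf (F.par v) = F.rootOf v),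
      (F.pathToRoot v).1 =
        SimpleGraph.Walk.cons h (((F.pathToRoot (F.par v)).1).copy rfl hr) := by
  have hne : v ≠ F.rootOf v := fun h => hv (h ▸ F.isRoot_rootOf v)
  have hnil : ¬ (F.pathToRoot v).1.Nil := Walk.not_nil_of_ne hne
  have hadj : F.graph.Adj v (F.par v) := (F.pathToRoot v).1.adj_snd hnil
  have htail : Walk.cons hadj (F.pathToRoot v).1.tail = (F.pathToRoot v).1 :=
    Walk.cons_tail_eq _ hnil
  have hpath : ((F.pathToRoot v).1.tail).IsPath := by
    have := (F.pathToRoot v).2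
    rw [← htail] at this
    exact this.of_cons
  have hr : F.rootOf (F.par v) = F.rootOf v :=
    F.rootOf_eq (F.isRoot_rootOf v) ((F.pathToRoot v).1.tail.reachable)
  refine ⟨hadj, hr, ?_⟩
  have : F.pathToRoot (F.par v) = ⟨((F.pathToRoot v).1.tail).copy rfl hr.symm, by
      exact (Walk.isPath_copy _ _ _).mpr hpath⟩ := F.pathToRoot_eq _ _
  rw [this]
  simp [← htail]
  rw [Walk.copy_cons]
  exact (congrArg (Walk.cons hadj) (Walk.copy_copy (F.pathToRoot v).1.tail
    (rfl : (F.pathToRoot v).1.snd = F.par v) hr.symm rfl hr)).symm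
variable {V : Type*} [Fintype V] [DecidableEq V] (F : GridForest V)

lemma adj_par {v : V} (hv : ¬ F.isRoot v) : F.graph.Adj v (F.par v) :=
  (F.pathToRoot_struct v hv).choose

lemma support_pathToRoot {v : V} (hv : ¬ F.isRoot v) :
    (F.pathToRoot v).1.support = v :: (F.pathToRoot (F.par v)).1.support := by
  obtain ⟨h, hr, he⟩ := F.pathToRoot_struct v hv
  rw [he]; simp

lemma notMem_support_par {v : V} (hv : ¬ F.isRoot v) :
    v ∉ (F.pathToRoot (F.par v)).1.support := by
  obtain ⟨h, hr, he⟩ := F.pathToRoot_struct v hv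
  have := (F.pathToRoot v).2
  rw [he, Walk.cons_isPath_iff] at this
  simpa using this.2

lemma edges_pathToRoot {v : V} (hv : ¬ F.isRoot v) :
    (F.pathToRoot v).1.edges = s(v, F.par v) :: (F.pathToRoot (F.par v)).1.edges := by
  obtain ⟨h, hr, he⟩ := F.pathToRoot_struct v hv
  rw [he]; simp

lemma length_pathToRoot {v : V} (hv : ¬ F.isRoot v) :
    (F.pathToRoot v).1.length = (F.pathToRoot (F.par v)).1.length + 1 := by
  obtain ⟨h, hr, he⟩ := F.pathToRoot_struct v hv
  rw [he]; simp

lemma not_par_par {a b : V} (ha : ¬ F.isRoot a) (hb : ¬ F.isRoot b)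
    (h1 : F.par a = b) (h2 : F.par b = a) : False := by
  have la := F.length_pathToRoot ha
  have lb := F.length_pathToRoot hb
  rw [h1] at la; rw [h2] at lb
  omega

lemma par_ne {v : V} (hv : ¬ F.isRoot v) : F.par v ≠ v := (F.adj_par hv).ne'

/-- classification of neighbours -/
lemma adj_cases {a c : V} (h : F.graph.Adj a c) :
    F.par a = c ∨ (¬ F.isRoot c ∧ F.par c = a) := by
  by_cases hc : a ∈ (F.pathToRoot c).1.support
  · right
    have hcr : ¬ F.isRoot c := by
      intro hr
      rw [F.support_pathToRoot_root hr] at hc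
      simp at hc
      exact h.ne' hc.symm
    refine ⟨hcr, ?_⟩
    -- takeUntil gives the path from c to a inside pathToRoot c; it must be the single edge
    have hq : ((F.pathToRoot c).1.takeUntil a hc).IsPath := (F.pathToRoot c).2.takeUntil hc
    have huniq : (⟨(F.pathToRoot c).1.takeUntil a hc, hq⟩ : F.graph.Path c a) =
        SimpleGraph.Path.singleton h.symm := F.isAcyclic.path_unique _ _
    have hq' : (F.pathToRoot c).1.takeUntil a hc = Walk.cons h.symm Walk.nil :=
      congrArg Subtype.val huniq
    have hspec := (F.pathToRoot c).1.take_spec hc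
    rw [hq'] at hspec
    have : (F.pathToRoot c).1 = Walk.cons h.symm ((F.pathToRoot c).1.dropUntil a hc) := by
      conv_lhs => rw [← hspec]
      simp [Walk.cons_append]
    unfold GridForest.par
    rw [this]
    simp [Walk.getVert_cons_succ]
  · left
    have hr : F.rootOf a = F.rootOf c :=
      F.rootOf_eq (F.isRoot_rootOf c) ((Walk.cons h (F.pathToRoot c).1).reachable)
    have hpath : (Walk.cons h (F.pathToRoot c).1).IsPath :=
      ((F.pathToRoot c).2).cons hc
    have := F.pathToRoot_eq a ⟨(Walk.cons h (F.pathToRoot c).1).copy rfl hr.symm, by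
      simpa using hpath⟩
    unfold GridForest.par
    rw [congrArg Subtype.val this]
    simp [Walk.getVert_cons_succ]

lemma pe_mem_of_mem_support : ∀ (n : ℕ) (a : V), (F.pathToRoot a).1.length = n →
    ∀ c : V, ¬ F.isRoot c → c ∈ (F.pathToRoot a).1.support →
    s(c, F.par c) ∈ (F.pathToRoot a).1.edges := by
  intro n
  induction n using Nat.strong_induction_on with
  | _ n ih =>
    intro a hlen c hc hmem
    by_cases ha : F.isRoot a
    · rw [F.support_pathToRoot_root ha] at hmem
      simp at hmem
      exact absurd (hmem ▸ ha) hc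
    · rw [F.support_pathToRoot ha] at hmem
      rw [F.edges_pathToRoot ha]
      rcases List.mem_cons.mp hmem with h | h
      · subst h; exact List.mem_cons_self
      · have hl := F.length_pathToRoot ha
        exact List.mem_cons_of_mem _
          (ih (F.pathToRoot (F.par a)).1.length (by omega) _ rfl c hc h)

lemma mem_support_iff_pe_mem {c : V} (hc : ¬ F.isRoot c) (a : V) :
    c ∈ (F.pathToRoot a).1.support ↔ s(c, F.par c) ∈ (F.pathToRoot a).1.edges :=
  ⟨fun h => F.pe_mem_of_mem_support _ a rfl c hc h,
   fun h => (F.pathToRoot a).1.fst_mem_support_of_mem_edges h⟩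

lemma exists_pe_of_mem_edges : ∀ (n : ℕ) (a : V), (F.pathToRoot a).1.length = n →
    ∀ e ∈ (F.pathToRoot a).1.edges, ∃ c : V, ¬ F.isRoot c ∧ s(c, F.par c) = e := by
  intro n
  induction n using Nat.strong_induction_on with
  | _ n ih =>
    intro a hlen e he
    by_cases ha : F.isRoot a
    · rw [F.edges_pathToRoot_root ha] at he
      simp at he
    · rw [F.edges_pathToRoot ha] at he
      rcases List.mem_cons.mp he with h | h
      · exact ⟨a, ha, h.symm⟩
      · have hl := F.length_pathToRoot ha
        exact ih (F.pathToRoot (F.par a)).1.length (by omega) _ rfl e h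

lemma pe_inj {c c' : V} (hc : ¬ F.isRoot c) (hc' : ¬ F.isRoot c')
    (h : s(c, F.par c) = s(c', F.par c')) : c = c' := by
  rw [Sym2.eq_iff] at h
  rcases h with ⟨h, -⟩ | ⟨h1, h2⟩
  · exact h
  · exact absurd (F.not_par_par hc hc' h2 h1.symm) (fun h => h)

lemma reachable_of_mem_support {a c : V} (h : c ∈ (F.pathToRoot a).1.support) :
    F.graph.Reachable a c := ((F.pathToRoot a).1.takeUntil c h).reachable

section Matrices

/-- The (square) incidence-type matrix of the rooted forest: rows indexed by non-root
vertices `c` (standing for the edge `s(c, par c)`), columns by non-root vertices. -/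
noncomputable def Nmat : Matrix {v : V // ¬ F.isRoot v} {v : V // ¬ F.isRoot v} ℝ :=
  fun c a => (if a = c then 1 else 0) - (if a.1 = F.par c.1 then 1 else 0)

/-- The path-indicator matrix. -/
noncomputable def Pmat : Matrix {v : V // ¬ F.isRoot v} {v : V // ¬ F.isRoot v} ℝ :=
  fun a c => if c.1 ∈ (F.pathToRoot a.1).1.support then 1 else 0

lemma Nmat_mul_Pmat : F.Nmat * F.Pmat = 1 := by
  ext c a
  rw [Matrix.mul_apply, Matrix.one_apply]
  simp only [Nmat, sub_mul, ite_mul, one_mul, zero_mul]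
  rw [Finset.sum_sub_distrib]
  rw [Finset.sum_ite_eq' Finset.univ c (fun x => F.Pmat x a)]
  have hsupp := F.support_pathToRoot c.2
  by_cases hroot : F.isRoot (F.par c.1)
  · have h2 : ∀ x : {v : V // ¬ F.isRoot v},
        (if x.1 = F.par c.1 then F.Pmat x a else 0) = 0 := by
      intro x
      rw [if_neg]; intro h; exact x.2 (h ▸ hroot)
    rw [Finset.sum_congr rfl (fun x _ => h2 x), Finset.sum_const_zero]
    simp only [Finset.mem_univ, if_true, sub_zero]
    rw [Pmat]
    rw [hsupp, F.support_pathToRoot_root hroot]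
    by_cases hca : c = a
    · subst hca; simp
    · rw [if_neg (by
        simp only [List.mem_cons, List.not_mem_nil, or_false]
        push_neg
        exact ⟨fun h => hca (Subtype.ext h.symm), fun h => a.2 (h ▸ hroot)⟩),
        if_neg hca]
  · have h2 : ∀ x : {v : V // ¬ F.isRoot v},
        (if x.1 = F.par c.1 then F.Pmat x a else 0)
          = (if x = ⟨F.par c.1, hroot⟩ then F.Pmat x a else 0) := by
      intro x; congr 1; simp [Subtype.ext_iff]
    rw [Finset.sum_congr rfl (fun x _ => h2 x),
      Finset.sum_ite_eq' Finset.univ _ (fun x => F.Pmat x a)]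
    simp only [Finset.mem_univ, if_true]
    rw [Pmat, Pmat]
    simp only
    rw [hsupp]
    by_cases hca : a = c
    · subst hca
      rw [if_pos List.mem_cons_self, if_neg (F.notMem_support_par a.2), if_pos rfl]
      norm_num
    · have : (a.1 ∈ c.1 :: (F.pathToRoot (F.par c.1)).1.support)
          ↔ a.1 ∈ (F.pathToRoot (F.par c.1)).1.support := by
        simp only [List.mem_cons]
        constructor
        · rintro (h | h)
          · exact absurd (Subtype.ext h) hca
          · exact h
        · exact Or.inr
      rw [if_neg (Ne.symm hca)]
      by_cases hmem : a.1 ∈ (F.pathToRoot (F.par c.1)).1.support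
      · rw [if_pos (this.mpr hmem), if_pos hmem]; ring
      · rw [if_neg (fun h => hmem (this.mp h)), if_neg hmem]; ring

end Matrices

lemma lap_eq (g : Sym2 V → ℝ) :
    F.lap g = F.Nmat.transpose *
      (Matrix.diagonal (fun c : {v : V // ¬ F.isRoot v} => g s(c.1, F.par c.1)) * F.Nmat) := by
  ext a b
  rw [Matrix.mul_apply]
  simp only [Matrix.transpose_apply, Matrix.diagonal_mul]
  by_cases hab : a = b
  · subst hab
    have hterm : ∀ c : {v : V // ¬ F.isRoot v},
        F.Nmat c a * (g s(c.1, F.par c.1) * F.Nmat c a) =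
        (if a = c then g s(c.1, F.par c.1) else 0)
          + (if a.1 = F.par c.1 then g s(c.1, F.par c.1) else 0) := by
      intro c
      have hcpar : ¬ ((c : V) = F.par c.1) := fun h => F.par_ne c.2 h.symm
      simp only [Nmat]
      by_cases h1 : a = c <;> by_cases h2 : a.1 = F.par c.1
      · exact absurd ((congrArg Subtype.val h1).symm.trans h2).symm (F.par_ne c.2)
      · simp [h1, h2, hcpar]; try ring
      · simp [h1, h2, hcpar]; try ring
      · simp [h1, h2, hcpar]; try ring
    rw [Finset.sum_congr rfl (fun c _ => hterm c), Finset.sum_add_distrib,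
      Finset.sum_ite_eq Finset.univ a (fun c => g s(c.1, F.par c.1))]
    simp only [Finset.mem_univ, if_true]
    have hS : F.par a.1 ∈ Finset.univ.filter (fun c => F.graph.Adj a.1 c) :=
      Finset.mem_filter.mpr ⟨Finset.mem_univ _, F.adj_par a.2⟩
    simp only [lap, if_true, eq_self_iff_true]
    rw [← Finset.add_sum_erase _ _ hS]
    congr 1
    rw [← Finset.sum_filter (fun c : {v : V // ¬ F.isRoot v} => a.1 = F.par c.1)
        (fun c => g s(c.1, F.par c.1))]
    refine (Finset.sum_bij (fun c _ => c.1) ?_ ?_ ?_ ?_).symm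
    · intro c hc
      have hpar : a.1 = F.par c.1 := (Finset.mem_filter.mp hc).2
      refine Finset.mem_erase.mpr ⟨?_, Finset.mem_filter.mpr ⟨Finset.mem_univ _, ?_⟩⟩
      · intro h
        exact F.not_par_par a.2 c.2 h.symm hpar.symm
      · show F.graph.Adj (a : V) (c : V)
        rw [hpar]; exact (F.adj_par c.2).symm
    · intro c₁ h₁ c₂ h₂ h
      exact Subtype.ext h
    · intro x hx
      obtain ⟨hne, hxS⟩ := Finset.mem_erase.mp hx
      have hadj : F.graph.Adj a.1 x := (Finset.mem_filter.mp hxS).2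
      rcases F.adj_cases hadj with h | ⟨hx2, h⟩
      · exact absurd h.symm hne
      · exact ⟨⟨x, hx2⟩, Finset.mem_filter.mpr ⟨Finset.mem_univ _, h.symm⟩, rfl⟩
    · intro c hc
      have hpar : a.1 = F.par c.1 := (Finset.mem_filter.mp hc).2
      rw [← hpar, Sym2.eq_swap]
  · have hterm : ∀ c : {v : V // ¬ F.isRoot v},
        F.Nmat c a * (g s(c.1, F.par c.1) * F.Nmat c b) =
        -(if a = c then (if b.1 = F.par c.1 then g s(c.1, F.par c.1) else 0) else 0)
          - (if b = c then (if a.1 = F.par c.1 then g s(c.1, F.par c.1) else 0) else 0) := by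
      intro c
      have hcpar : ¬ ((c : V) = F.par c.1) := fun h => F.par_ne c.2 h.symm
      simp only [Nmat]
      by_cases h1 : a = c <;> by_cases h3 : b = c <;>
        by_cases h2 : a.1 = F.par c.1 <;> by_cases h4 : b.1 = F.par c.1 <;>
        first
          | (exact absurd (h1.trans h3.symm) hab)
          | (exact absurd (Subtype.ext (h2.trans h4.symm)) hab)
          | (exact absurd ((congrArg Subtype.val h1).symm.trans h2).symm (F.par_ne c.2))
          | (exact absurd ((congrArg Subtype.val h3).symm.trans h4).symm (F.par_ne c.2))
          | (simp [h1, h2, h3, h4, hcpar]; ring)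
          | (simp [h1, h2, h3, h4, hcpar])
    rw [Finset.sum_congr rfl (fun c _ => hterm c), Finset.sum_sub_distrib,
      Finset.sum_neg_distrib]
    rw [Finset.sum_ite_eq Finset.univ a, Finset.sum_ite_eq Finset.univ b]
    simp only [Finset.mem_univ, if_true]
    simp only [lap]
    rw [if_neg hab]
    by_cases hadj : F.graph.Adj a.1 b.1
    · rw [if_pos hadj]
      rcases F.adj_cases hadj with h | ⟨hb2, h⟩
      · rw [if_pos h.symm, if_neg (fun h2 => F.not_par_par a.2 b.2 h h2.symm), ← h]
        ring
      · rw [if_neg (fun h4 => F.not_par_par b.2 a.2 h h4.symm), if_pos h.symm, ← h,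
          Sym2.eq_swap]
        ring
    · rw [if_neg hadj, if_neg (fun h4 => hadj (by rw [h4]; exact F.adj_par a.2)),
        if_neg (fun h2 => hadj (by rw [h2]; exact (F.adj_par b.2).symm))]
      ring

lemma entry_PDPt (g : Sym2 V → ℝ) (a b : {v : V // ¬ F.isRoot v}) :
    (F.Pmat * (Matrix.diagonal
        (fun c : {v : V // ¬ F.isRoot v} => (g s(c.1, F.par c.1))⁻¹) * F.Pmat.transpose)) a b
      = ∑ e ∈ F.pathEdges a.1 ∩ F.pathEdges b.1, (g e)⁻¹ := by
  rw [Matrix.mul_apply]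
  simp only [Matrix.diagonal_mul, Matrix.transpose_apply]
  have hterm : ∀ c : {v : V // ¬ F.isRoot v},
      F.Pmat a c * ((g s(c.1, F.par c.1))⁻¹ * F.Pmat b c)
      = if c.1 ∈ (F.pathToRoot a.1).1.support ∧ c.1 ∈ (F.pathToRoot b.1).1.support
          then (g s(c.1, F.par c.1))⁻¹ else 0 := by
    intro c
    simp only [Pmat]
    by_cases h1 : c.1 ∈ (F.pathToRoot a.1).1.support <;>
      by_cases h2 : c.1 ∈ (F.pathToRoot b.1).1.support <;>
      simp [h1, h2]
  rw [Finset.sum_congr rfl (fun c _ => hterm c),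
    ← Finset.sum_filter (fun c : {v : V // ¬ F.isRoot v} =>
        c.1 ∈ (F.pathToRoot a.1).1.support ∧ c.1 ∈ (F.pathToRoot b.1).1.support)
      (fun c => (g s(c.1, F.par c.1))⁻¹)]
  refine Finset.sum_bij (fun c _ => s(c.1, F.par c.1)) ?_ ?_ ?_ ?_
  · intro c hc
    obtain ⟨h1, h2⟩ := (Finset.mem_filter.mp hc).2
    exact Finset.mem_inter.mpr
      ⟨List.mem_toFinset.mpr ((F.mem_support_iff_pe_mem c.2 _).1 h1),
       List.mem_toFinset.mpr ((F.mem_support_iff_pe_mem c.2 _).1 h2)⟩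
  · intro c1 hc1 c2 hc2 h
    exact Subtype.ext (F.pe_inj c1.2 c2.2 h)
  · intro e he
    obtain ⟨h1, h2⟩ := Finset.mem_inter.mp he
    obtain ⟨c, hc, hpe⟩ := F.exists_pe_of_mem_edges _ a.1 rfl e (List.mem_toFinset.mp h1)
    refine ⟨⟨c, hc⟩, Finset.mem_filter.mpr ⟨Finset.mem_univ _, ?_, ?_⟩, hpe⟩
    · exact (F.mem_support_iff_pe_mem hc _).2 (by rw [hpe]; exact List.mem_toFinset.mp h1)
    · exact (F.mem_support_iff_pe_mem hc _).2 (by rw [hpe]; exact List.mem_toFinset.mp h2)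
  · intro c hc
    rfl

lemma reachable_of_mem_pathEdges {a b : V} {e : Sym2 V}
    (ha : e ∈ F.pathEdges a) (hb : e ∈ F.pathEdges b) : F.graph.Reachable a b := by
  rw [pathEdges, List.mem_toFinset] at ha hb
  revert ha hb
  refine Sym2.ind (fun x y ha hb => ?_) e
  exact (F.reachable_of_mem_support
      ((F.pathToRoot a).1.fst_mem_support_of_mem_edges ha)).trans
    ((F.reachable_of_mem_support
      ((F.pathToRoot b).1.fst_mem_support_of_mem_edges hb)).symm)

end GridForest

/-- For a rooted forest with strictly positive conductances `g` on its
edges, the reduced weighted Laplacian `L` is invertible; `L⁻¹(a,b) = 0` whenever `a`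
and `b` lie in different trees, and `L⁻¹(a,b) = ∑_{e ∈ E_a ∩ E_b} 1/g_e` whenever `a`
and `b` lie in the same tree. -/
theorem forest_laplacian_inverse
    {V : Type*} [Fintype V] [DecidableEq V] (F : GridForest V)
    (g : Sym2 V → ℝ) (hg : ∀ e ∈ F.graph.edgeSet, 0 < g e) :
    IsUnit (F.lap g) ∧
    ∀ a b : {v : V // ¬ F.isRoot v},
      (¬ F.graph.Reachable a.1 b.1 → (F.lap g)⁻¹ a b = 0) ∧
      (F.graph.Reachable a.1 b.1 →
        (F.lap g)⁻¹ a b = ∑ e ∈ F.pathEdges a.1 ∩ F.pathEdges b.1, (g e)⁻¹) := by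
  have hNP : F.Nmat * F.Pmat = 1 := F.Nmat_mul_Pmat
  have hPN : F.Pmat * F.Nmat = 1 := mul_eq_one_comm.mp hNP
  set D := Matrix.diagonal
    (fun c : {v : V // ¬ F.isRoot v} => g s(c.1, F.par c.1)) with hD
  set D' := Matrix.diagonal
    (fun c : {v : V // ¬ F.isRoot v} => (g s(c.1, F.par c.1))⁻¹) with hD'
  have hDD : D * D' = 1 := by
    rw [hD, hD', Matrix.diagonal_mul_diagonal]
    have : (fun c : {v : V // ¬ F.isRoot v} =>
        g s(c.1, F.par c.1) * (g s(c.1, F.par c.1))⁻¹) = fun _ => 1 := by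
      funext c
      exact mul_inv_cancel₀
        (ne_of_gt (hg _ (F.graph.mem_edgeSet.mpr (F.adj_par c.2))))
    rw [this, Matrix.diagonal_one]
  have hLQ : F.lap g * (F.Pmat * (D' * F.Pmat.transpose)) = 1 := by
    rw [F.lap_eq g, ← hD]
    have h1 : F.Nmat.transpose * (D * F.Nmat) * (F.Pmat * (D' * F.Pmat.transpose))
        = F.Nmat.transpose * (D * ((F.Nmat * F.Pmat) * (D' * F.Pmat.transpose))) := by
      simp only [Matrix.mul_assoc]
    rw [h1, hNP, Matrix.one_mul, ← Matrix.mul_assoc D D', hDD, Matrix.one_mul,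
      ← Matrix.transpose_mul, hPN, Matrix.transpose_one]
  have hinv : (F.lap g)⁻¹ = F.Pmat * (D' * F.Pmat.transpose) :=
    Matrix.inv_eq_right_inv hLQ
  refine ⟨⟨⟨F.lap g, F.Pmat * (D' * F.Pmat.transpose), hLQ,
    mul_eq_one_comm.mp hLQ⟩, rfl⟩, ?_⟩
  intro a b
  constructor
  · intro hur
    rw [hinv, hD', F.entry_PDPt g a b]
    refine Finset.sum_eq_zero fun e he => ?_
    obtain ⟨h1, h2⟩ := Finset.mem_inter.mp he
    exact absurd (F.reachable_of_mem_pathEdges h1 h2) hur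
  · intro _
    rw [hinv, hD']
    exact F.entry_PDPt g a b
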